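/- Let a < b be real numbers and let u, v, w be piecewise linear, orientation-preserving self-homeomorphisms of [a,b], each fixing a and b and having no fixed point in the open interval (a,b). Let m and n be integers and suppose that both w⁻ᵐvwᵐ and w⁻ⁿvwⁿ commute with u. Then w^{n−m} commutes with v. -/

import Mathlib

/-- A piecewise linear, orientation-preserving self-homeomorphism of `[a,b]` fixing `a`
and `b` and having no fixed point in the open interval `(a,b)`: a strictly increasing
bijection of `[a,b]` that is affine on each piece of some finite partition of `[a,b]`. -/
def IsOneBumpPL (a b : ℝ) (g : Equiv.Perm (Set.Icc a b)) : Prop :=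
  StrictMono (fun z : Set.Icc a b => ((g z : Set.Icc a b) : ℝ)) ∧
  (∀ z : Set.Icc a b, (z : ℝ) = a ∨ (z : ℝ) = b → g z = z) ∧
  (∀ z : Set.Icc a b, a < (z : ℝ) → (z : ℝ) < b → g z ≠ z) ∧
  ∃ (n : ℕ) (x : ℕ → ℝ), 0 < n ∧ x 0 = a ∧ x n = b ∧ (∀ i < n, x i < x (i + 1)) ∧
    ∀ i < n, ∃ s t : ℝ, ∀ z : Set.Icc a b,
      x i ≤ (z : ℝ) → (z : ℝ) ≤ x (i + 1) →
        ((g z : Set.Icc a b) : ℝ) = s * (z : ℝ) + t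

theorem Equiv.Perm.apply_inv_self {α : Type*} (f : Equiv.Perm α) (x : α) : f (f⁻¹ x) = x :=
  f.apply_symm_apply x

theorem Equiv.Perm.inv_apply_self {α : Type*} (f : Equiv.Perm α) (x : α) : f⁻¹ (f x) = x :=
  f.symm_apply_apply x

namespace Stmt19Aux

variable {a b : ℝ}

lemma strictMono_subtype {g : Equiv.Perm (Set.Icc a b)}
    (h : StrictMono (fun z : Set.Icc a b => ((g z : Set.Icc a b) : ℝ))) :
    StrictMono ⇑g := fun x y hxy => by
  have := h hxy
  exact_mod_cast this

lemma inv_strictMono {g : Equiv.Perm (Set.Icc a b)} (h : StrictMono ⇑g) :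
    StrictMono ⇑g⁻¹ := fun x y hxy => by
  by_contra h'
  push_neg at h'
  have := h.monotone h'
  simp only [Equiv.Perm.apply_inv_self] at this
  exact absurd hxy (not_lt.2 this)

/-- IVT-style fixed point lemma for strictly monotone permutations of [a,b]. -/
lemma exists_fixed (u : Equiv.Perm (Set.Icc a b)) (hsm : StrictMono ⇑u)
    (p q : Set.Icc a b) (hpq : (p : ℝ) < q)
    (hp : (p : ℝ) < ((u p : Set.Icc a b) : ℝ))
    (hq : ((u q : Set.Icc a b) : ℝ) < q) :
    ∃ L : Set.Icc a b, (p : ℝ) ≤ L ∧ (L : ℝ) ≤ q ∧ u L = L := by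
  set S : Set ℝ := {r | ∃ hr : r ∈ Set.Icc a b,
    (p : ℝ) ≤ r ∧ r ≤ (q : ℝ) ∧ r < ((u ⟨r, hr⟩ : Set.Icc a b) : ℝ)} with hS
  have hpS : (p : ℝ) ∈ S := by
    refine ⟨p.2, le_refl _, le_of_lt hpq, ?_⟩
    simpa using hp
  have hbdd : BddAbove S := ⟨(q : ℝ), fun r hr => hr.2.2.1⟩
  set L : ℝ := sSup S with hL
  have hL1 : (p : ℝ) ≤ L := le_csSup hbdd hpS
  have hL2 : L ≤ (q : ℝ) := csSup_le ⟨_, hpS⟩ fun r hr => hr.2.2.1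
  have hLmem : L ∈ Set.Icc a b := ⟨le_trans p.2.1 hL1, le_trans hL2 q.2.2⟩
  set Lpt : Set.Icc a b := ⟨L, hLmem⟩ with hLpt
  -- (i) : L ≤ u Lpt
  have hi : L ≤ ((u Lpt : Set.Icc a b) : ℝ) := by
    refine csSup_le ⟨_, hpS⟩ fun r hr => ?_
    obtain ⟨hrmem, hpr, hrq, hru⟩ := hr
    have hrL : r ≤ L := le_csSup hbdd ⟨hrmem, hpr, hrq, hru⟩
    have : (⟨r, hrmem⟩ : Set.Icc a b) ≤ Lpt := Subtype.mk_le_mk.mpr hrL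
    have := hsm.monotone this
    have : ((u ⟨r, hrmem⟩ : Set.Icc a b) : ℝ) ≤ ((u Lpt : Set.Icc a b) : ℝ) := by
      exact_mod_cast this
    linarith
  -- (ii) : u Lpt ≤ L
  have hii : ((u Lpt : Set.Icc a b) : ℝ) ≤ L := by
    by_contra hlt
    push_neg at hlt
    have hLq : L < (q : ℝ) := by
      rcases lt_or_eq_of_le hL2 with h | h
      · exact h
      · exfalso
        have : Lpt = q := Subtype.ext h
        rw [this] at hlt
        linarith
    set y : ℝ := min ((L + ((u Lpt : Set.Icc a b) : ℝ)) / 2) (q : ℝ) with hy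
    have hy1 : L < y := lt_min (by linarith) hLq
    have hy2 : y ≤ (q : ℝ) := min_le_right _ _
    have hy3 : y < ((u Lpt : Set.Icc a b) : ℝ) := by
      rcases le_or_gt ((L + ((u Lpt : Set.Icc a b) : ℝ)) / 2) (q : ℝ) with h | h
      · rw [hy, min_eq_left h]; linarith
      · rw [hy, min_eq_right h.le]; linarith
    have hymem : y ∈ Set.Icc a b := ⟨le_trans hLmem.1 hy1.le, le_trans hy2 q.2.2⟩
    set ypt : Set.Icc a b := ⟨y, hymem⟩ with hypt
    have hLy : Lpt < ypt := Subtype.mk_lt_mk.mpr hy1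
    have huy : ((u Lpt : Set.Icc a b) : ℝ) < ((u ypt : Set.Icc a b) : ℝ) := by
      exact_mod_cast hsm hLy
    have hyS : y ∈ S := ⟨hymem, le_trans hL1 hy1.le, hy2, by linarith⟩
    have : y ≤ L := le_csSup hbdd hyS
    linarith
  refine ⟨Lpt, hL1, hL2, Subtype.ext (le_antisymm hii hi)⟩

/-- sign consistency: a fixed-point-free (in the interior) strictly monotone
permutation lies entirely above or entirely below the diagonal. -/
lemma sign_consistent (u : Equiv.Perm (Set.Icc a b)) (hsm : StrictMono ⇑u)
    (hnf : ∀ z : Set.Icc a b, a < (z : ℝ) → (z : ℝ) < b → u z ≠ z) :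
    (∀ z : Set.Icc a b, a < (z : ℝ) → (z : ℝ) < b →
        (z : ℝ) < ((u z : Set.Icc a b) : ℝ)) ∨
    (∀ z : Set.Icc a b, a < (z : ℝ) → (z : ℝ) < b →
        ((u z : Set.Icc a b) : ℝ) < z) := by
  by_contra hcon
  push_neg at hcon
  obtain ⟨⟨z1, hz1a, hz1b, h1⟩, ⟨z2, hz2a, hz2b, h2⟩⟩ := hcon
  -- u z1 ≤ z1 and z2 ≤ u z2, strict since no fixed points
  have h1' : ((u z1 : Set.Icc a b) : ℝ) < z1 :=
    lt_of_le_of_ne h1 (fun h => hnf z1 hz1a hz1b (Subtype.ext h))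
  have h2' : (z2 : ℝ) < ((u z2 : Set.Icc a b) : ℝ) :=
    lt_of_le_of_ne h2 (fun h => hnf z2 hz2a hz2b (Subtype.ext h.symm))
  rcases lt_trichotomy (z2 : ℝ) (z1 : ℝ) with h | h | h
  · obtain ⟨L, hL1, hL2, hLfix⟩ := exists_fixed u hsm z2 z1 h h2' h1'
    exact hnf L (lt_of_lt_of_le hz2a hL1) (lt_of_le_of_lt hL2 hz1b) hLfix
  · have : z2 = z1 := Subtype.ext h
    rw [this] at h2'
    linarith
  · -- z1 < z2 : apply to u⁻¹
    have hsm' := inv_strictMono hsm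
    have hp : (z1 : ℝ) < ((u⁻¹ z1 : Set.Icc a b) : ℝ) := by
      by_contra hle
      push_neg at hle
      have : u⁻¹ z1 ≤ z1 := Subtype.coe_le_coe.mp hle
      have := hsm.monotone this
      rw [Equiv.Perm.apply_inv_self] at this
      have : (z1 : ℝ) ≤ ((u z1 : Set.Icc a b) : ℝ) := Subtype.coe_le_coe.mpr this
      linarith
    have hq : ((u⁻¹ z2 : Set.Icc a b) : ℝ) < z2 := by
      by_contra hle
      push_neg at hle
      have : z2 ≤ u⁻¹ z2 := Subtype.coe_le_coe.mp hle
      have := hsm.monotone this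
      rw [Equiv.Perm.apply_inv_self] at this
      have : ((u z2 : Set.Icc a b) : ℝ) ≤ (z2 : ℝ) := Subtype.coe_le_coe.mpr this
      linarith
    obtain ⟨L, hL1, hL2, hLfix⟩ := exists_fixed u⁻¹ hsm' z1 z2 h hp hq
    have : u L = L := by
      have := congrArg u hLfix
      rw [Equiv.Perm.apply_inv_self] at this
      exact this.symm
    exact hnf L (lt_of_lt_of_le hz1a hL1) (lt_of_le_of_lt hL2 hz2b) this

/-- the rigidity lemma: an element commuting with a one-bump map, fixing b,
    and equal to the identity near a, is the identity. -/
lemma rigid (hab : a < b) {u g : Equiv.Perm (Set.Icc a b)}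
    (hu : IsOneBumpPL a b u) (hcomm : Commute g u)
    (hgb : ∀ z : Set.Icc a b, (z : ℝ) = b → g z = z)
    (hnear : ∃ ε : ℝ, 0 < ε ∧ ∀ z : Set.Icc a b, (z : ℝ) ≤ a + ε → g z = z) :
    g = 1 := by
  obtain ⟨husm', hufix, hunf, _⟩ := hu
  have husm : StrictMono ⇑u := strictMono_subtype husm'
  -- build u' with: commutes with g, strictly monotone, below diagonal on interior,
  -- fixes both endpoints
  obtain ⟨u', hc', hsm', hdown, hfa, hfb⟩ :
      ∃ u' : Equiv.Perm (Set.Icc a b), Commute g u' ∧ StrictMono ⇑u' ∧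
        (∀ z : Set.Icc a b, a < (z : ℝ) → (z : ℝ) < b →
          ((u' z : Set.Icc a b) : ℝ) < z) ∧
        (∀ z : Set.Icc a b, (z : ℝ) = a → u' z = z) ∧
        (∀ z : Set.Icc a b, (z : ℝ) = b → u' z = z) := by
    rcases sign_consistent u husm hunf with hup | hdown
    · refine ⟨u⁻¹, hcomm.inv_right, inv_strictMono husm, ?_, ?_, ?_⟩
      · intro z hza hzb
        -- u⁻¹ z is interior
        have h1 : a ≤ ((u⁻¹ z : Set.Icc a b) : ℝ) := (u⁻¹ z).2.1
        have h2 : ((u⁻¹ z : Set.Icc a b) : ℝ) ≤ b := (u⁻¹ z).2.2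
        have hia : a < ((u⁻¹ z : Set.Icc a b) : ℝ) := by
          rcases lt_or_eq_of_le h1 with h | h
          · exact h
          · exfalso
            have hz : u⁻¹ z = ⟨a, by constructor <;> linarith⟩ := Subtype.ext h.symm
            have := congrArg u hz
            rw [Equiv.Perm.apply_inv_self] at this
            have hfix := hufix ⟨a, by constructor <;> linarith⟩ (Or.inl rfl)
            rw [hfix] at this
            rw [this] at hza
            simp at hza
        have hib : ((u⁻¹ z : Set.Icc a b) : ℝ) < b := by
          rcases lt_or_eq_of_le h2 with h | h
          · exact h
          · exfalso
            have hz : u⁻¹ z = ⟨b, by constructor <;> linarith⟩ := Subtype.ext h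
            have := congrArg u hz
            rw [Equiv.Perm.apply_inv_self] at this
            have hfix := hufix ⟨b, by constructor <;> linarith⟩ (Or.inr rfl)
            rw [hfix] at this
            rw [this] at hzb
            simp at hzb
        have := hup (u⁻¹ z) hia hib
        rwa [Equiv.Perm.apply_inv_self] at this
      · intro z hz
        have hfix := hufix z (Or.inl hz)
        have := congrArg (fun y => u⁻¹ y) hfix
        simp only [Equiv.Perm.inv_apply_self] at this
        exact this.symm
      · intro z hz
        have hfix := hufix z (Or.inr hz)
        have := congrArg (fun y => u⁻¹ y) hfix
        simp only [Equiv.Perm.inv_apply_self] at this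
        exact this.symm
    · exact ⟨u, hcomm, husm, hdown, fun z hz => hufix z (Or.inl hz),
        fun z hz => hufix z (Or.inr hz)⟩
  obtain ⟨ε, hε, hid⟩ := hnear
  apply Equiv.ext
  intro z
  rw [Equiv.Perm.one_apply]
  by_cases hz1 : (z : ℝ) ≤ a + ε
  · exact hid z hz1
  push_neg at hz1
  by_cases hz2 : (z : ℝ) = b
  · exact hgb z hz2
  have hza : a < (z : ℝ) := by linarith
  have hzb : (z : ℝ) < b := lt_of_le_of_ne z.2.2 hz2
  -- the orbit
  set f : ℕ → Set.Icc a b := fun k => (u' ^ k) z with hf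
  have hf0 : f 0 = z := by simp [hf]
  have hfs : ∀ k, f (k + 1) = u' (f k) := by
    intro k
    simp only [hf, pow_succ', Equiv.Perm.mul_apply]
  have hint : ∀ k, a < ((f k : Set.Icc a b) : ℝ) ∧ ((f k : Set.Icc a b) : ℝ) < b := by
    intro k
    induction k with
    | zero => rw [hf0]; exact ⟨hza, hzb⟩
    | succ k ih =>
      rw [hfs k]
      constructor
      · have hane : a < b := hab
        have hapt : (⟨a, by constructor <;> linarith⟩ : Set.Icc a b) < f k :=
          Subtype.mk_lt_mk.mpr ih.1
        have := hsm' hapt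
        have heq := hfa ⟨a, by constructor <;> linarith⟩ rfl
        rw [heq] at this
        exact_mod_cast this
      · have hbpt : f k < (⟨b, by constructor <;> linarith⟩ : Set.Icc a b) :=
          Subtype.mk_lt_mk.mpr ih.2
        have := hsm' hbpt
        have heq := hfb ⟨b, by constructor <;> linarith⟩ rfl
        rw [heq] at this
        exact_mod_cast this
  -- infimum of the orbit
  set L : ℝ := ⨅ k, ((f k : Set.Icc a b) : ℝ) with hLdef
  have hbdd : BddBelow (Set.range fun k => ((f k : Set.Icc a b) : ℝ)) :=
    ⟨a, by rintro r ⟨k, rfl⟩; exact (f k).2.1⟩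
  have hLa : a ≤ L := le_ciInf fun k => (f k).2.1
  have hLz : L ≤ (z : ℝ) := by
    have := ciInf_le hbdd 0
    rwa [hf0] at this
  have hLeqa : L = a := by
    by_contra hne
    have hLa' : a < L := lt_of_le_of_ne hLa (Ne.symm hne)
    have hLmem : L ∈ Set.Icc a b := ⟨hLa, le_trans hLz z.2.2⟩
    set Lpt : Set.Icc a b := ⟨L, hLmem⟩ with hLpt
    have hLb : L < b := lt_of_le_of_lt hLz hzb
    have hdL : ((u' Lpt : Set.Icc a b) : ℝ) < L := hdown Lpt hLa' hLb
    set M : Set.Icc a b := u'⁻¹ Lpt with hM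
    have hLM : Lpt < M := by
      have h1 : u' Lpt < Lpt := Subtype.mk_lt_mk.mpr hdL
      have h2 := inv_strictMono hsm' h1
      rwa [Equiv.Perm.inv_apply_self] at h2
    have hexists : ∃ k, ((f k : Set.Icc a b) : ℝ) < (M : ℝ) := by
      apply exists_lt_of_ciInf_lt
      rw [← hLdef]
      exact_mod_cast Subtype.coe_lt_coe.mpr hLM
    obtain ⟨k, hk⟩ := hexists
    have hkM : f k < M := Subtype.coe_lt_coe.mp hk
    have := hsm' hkM
    rw [hM, Equiv.Perm.apply_inv_self] at this
    have hlt : ((f (k+1) : Set.Icc a b) : ℝ) < L := by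
      rw [hfs k]
      exact_mod_cast this
    have := ciInf_le hbdd (k + 1)
    rw [← hLdef] at this
    linarith
  have hk : ∃ k, ((f k : Set.Icc a b) : ℝ) < a + ε := by
    apply exists_lt_of_ciInf_lt
    rw [← hLdef, hLeqa]
    linarith
  obtain ⟨k, hk⟩ := hk
  rw [hf] at hk
  have hgfk : g ((u' ^ k) z) = (u' ^ k) z := hid _ hk.le
  have hck : Commute g (u' ^ k) := hc'.pow_right k
  have happ : g ((u' ^ k) z) = (u' ^ k) (g z) := by
    have := congrArg (fun σ : Equiv.Perm (Set.Icc a b) => σ z) hck.eq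
    simpa [Equiv.Perm.mul_apply] using this
  have h3 : (u' ^ k) (g z) = (u' ^ k) z := by rw [← happ]; exact hgfk
  exact (u' ^ k).injective h3

/-- `g` has (right) slope `s` at `a`. -/
def HasSlope (a b : ℝ) (g : Equiv.Perm (Set.Icc a b)) (s : ℝ) : Prop :=
  0 < s ∧ ∃ ε : ℝ, 0 < ε ∧ ∀ z : Set.Icc a b, (z : ℝ) ≤ a + ε →
    ((g z : Set.Icc a b) : ℝ) - a = s * ((z : ℝ) - a)

lemma hasSlope_one : HasSlope a b 1 1 :=
  ⟨one_pos, 1, one_pos, fun z _ => by simp⟩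

lemma hasSlope_mul {g h : Equiv.Perm (Set.Icc a b)} {s t : ℝ}
    (hg : HasSlope a b g s) (hh : HasSlope a b h t) : HasSlope a b (g * h) (s * t) := by
  obtain ⟨hs, εg, hεg, Hg⟩ := hg
  obtain ⟨ht, εh, hεh, Hh⟩ := hh
  refine ⟨mul_pos hs ht, min εh (εg / t), lt_min hεh (div_pos hεg ht), fun z hz => ?_⟩
  have hz1 : (z : ℝ) ≤ a + εh := le_trans hz (by simp [min_le_left])
  have hz2 : (z : ℝ) - a ≤ εg / t := by
    have := le_trans hz (by simp [min_le_right] : a + min εh (εg / t) ≤ a + εg / t)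
    linarith
  have hza : a ≤ (z : ℝ) := z.2.1
  have Hhz := Hh z hz1
  have hhz : ((h z : Set.Icc a b) : ℝ) ≤ a + εg := by
    have : t * ((z : ℝ) - a) ≤ t * (εg / t) := by
      apply mul_le_mul_of_nonneg_left hz2 ht.le
    rw [mul_div_cancel₀ _ (ne_of_gt ht)] at this
    linarith
  have Hgz := Hg (h z) hhz
  rw [Equiv.Perm.mul_apply, Hgz, Hhz]
  ring

lemma hasSlope_inv (hab : a < b) {g : Equiv.Perm (Set.Icc a b)} {s : ℝ}
    (hsm : StrictMono ⇑g) (hg : HasSlope a b g s) : HasSlope a b g⁻¹ s⁻¹ := by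
  obtain ⟨hs, ε, hε, Hg⟩ := hg
  set ε₀ : ℝ := min ε (b - a) with hε₀def
  have hε₀ : 0 < ε₀ := lt_min hε (by linarith)
  have hwmem : a + ε₀ ∈ Set.Icc a b := by
    constructor
    · linarith
    · have : ε₀ ≤ b - a := min_le_right _ _
      linarith
  set wpt : Set.Icc a b := ⟨a + ε₀, hwmem⟩ with hwpt
  have hgw : ((g wpt : Set.Icc a b) : ℝ) - a = s * ε₀ := by
    have := Hg wpt (by simp only [hwpt]; have : ε₀ ≤ ε := min_le_left _ _; simp; linarith)
    simpa [hwpt] using this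
  refine ⟨inv_pos.mpr hs, s * ε₀, mul_pos hs hε₀, fun z hz => ?_⟩
  have hzg : z ≤ g wpt := by
    rw [← Subtype.coe_le_coe]
    linarith
  have hinvle : g⁻¹ z ≤ wpt := by
    by_contra hcon
    push_neg at hcon
    have := hsm hcon
    rw [Equiv.Perm.apply_inv_self] at this
    exact absurd hzg (not_le.2 this)
  have hcoele : ((g⁻¹ z : Set.Icc a b) : ℝ) ≤ a + ε := by
    have := Subtype.coe_le_coe.mpr hinvle
    have h2 : ε₀ ≤ ε := min_le_left _ _
    simp only [hwpt] at this
    linarith [this]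
  have heq := Hg (g⁻¹ z) hcoele
  rw [Equiv.Perm.apply_inv_self] at heq
  rw [heq, inv_mul_cancel_left₀ (ne_of_gt hs)]

lemma hasSlope_pow {g : Equiv.Perm (Set.Icc a b)} {s : ℝ}
    (hg : HasSlope a b g s) : ∀ k : ℕ, HasSlope a b (g ^ k) (s ^ k) := by
  intro k
  induction k with
  | zero => simpa using hasSlope_one
  | succ k ih =>
    rw [pow_succ, pow_succ]
    exact hasSlope_mul ih hg

lemma hasSlope_zpow (hab : a < b) {g : Equiv.Perm (Set.Icc a b)} {s : ℝ}
    (hsm : StrictMono ⇑g) (hg : HasSlope a b g s) :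
    ∀ k : ℤ, HasSlope a b (g ^ k) (s ^ k) := by
  intro k
  cases k with
  | ofNat p =>
    rw [Int.ofNat_eq_coe, zpow_natCast, zpow_natCast]
    exact hasSlope_pow hg p
  | negSucc p =>
    rw [zpow_negSucc, zpow_negSucc, ← inv_pow, ← inv_pow]
    exact hasSlope_pow (hasSlope_inv hab hsm hg) (p + 1)

lemma exists_hasSlope (hab : a < b) {g : Equiv.Perm (Set.Icc a b)}
    (hg : IsOneBumpPL a b g) : ∃ s : ℝ, HasSlope a b g s := by
  obtain ⟨hsm', hfix, hnf, nn, x, hnn, hx0, hxn, hmono, hpieces⟩ := hg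
  obtain ⟨s, t, hst⟩ := hpieces 0 hnn
  have hx1 : x 0 < x 1 := hmono 0 hnn
  rw [hx0] at hx1
  have hamem : a ∈ Set.Icc a b := ⟨le_refl _, hab.le⟩
  set apt : Set.Icc a b := ⟨a, hamem⟩ with hapt
  have hga : g apt = apt := hfix apt (Or.inl rfl)
  have hgaeq : a = s * a + t := by
    have := hst apt (by rw [hx0]) (by simp only [hapt]; exact hx1.le)
    rwa [hga] at this
  -- formula on the first piece
  have hform : ∀ z : Set.Icc a b, (z : ℝ) ≤ a + (x 1 - a) →
      ((g z : Set.Icc a b) : ℝ) - a = s * ((z : ℝ) - a) := by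
    intro z hz
    have h1 : x 0 ≤ (z : ℝ) := by rw [hx0]; exact z.2.1
    have h2 : (z : ℝ) ≤ x 1 := by linarith
    have := hst z h1 h2
    rw [this]
    linarith [hgaeq]
  -- positivity of s
  set z0 : ℝ := min (x 1) b with hz0def
  have hz0a : a < z0 := lt_min hx1 hab
  have hz0mem : z0 ∈ Set.Icc a b := ⟨hz0a.le, min_le_right _ _⟩
  set z0pt : Set.Icc a b := ⟨z0, hz0mem⟩ with hz0pt
  have hgz0 : ((g z0pt : Set.Icc a b) : ℝ) - a = s * (z0 - a) := by
    apply hform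
    have : z0 ≤ x 1 := min_le_left _ _
    simp only [hz0pt]
    linarith
  have hpos : (0 : ℝ) < s := by
    have hlt : apt < z0pt := Subtype.mk_lt_mk.mpr hz0a
    have := hsm' hlt
    simp only [hapt] at this
    have hga' : ((g apt : Set.Icc a b) : ℝ) = a := by rw [hga]
    have h2 : a < ((g z0pt : Set.Icc a b) : ℝ) := by
      calc a = ((g apt : Set.Icc a b) : ℝ) := hga'.symm
        _ < _ := this
    have h3 : 0 < s * (z0 - a) := by linarith
    have h4 : 0 < z0 - a := by linarith
    rcases mul_pos_iff.mp h3 with ⟨h5, _⟩ | ⟨_, h6⟩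
    · exact h5
    · linarith
  exact ⟨s, hpos, x 1 - a, by linarith, hform⟩

lemma near_of_slope_one {g : Equiv.Perm (Set.Icc a b)}
    (h : HasSlope a b g 1) :
    ∃ ε : ℝ, 0 < ε ∧ ∀ z : Set.Icc a b, (z : ℝ) ≤ a + ε → g z = z := by
  obtain ⟨_, ε, hε, H⟩ := h
  refine ⟨ε, hε, fun z hz => ?_⟩
  have := H z hz
  rw [one_mul] at this
  exact Subtype.ext (by linarith)

lemma fix_mul {p : Set.Icc a b} {g h : Equiv.Perm (Set.Icc a b)}
    (hg : g p = p) (hh : h p = p) : (g * h) p = p := by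
  rw [Equiv.Perm.mul_apply, hh, hg]

lemma fix_inv {p : Set.Icc a b} {g : Equiv.Perm (Set.Icc a b)}
    (hg : g p = p) : g⁻¹ p = p := by
  have := congrArg (fun y => g⁻¹ y) hg
  simp only [Equiv.Perm.inv_apply_self] at this
  exact this.symm

lemma fix_pow {p : Set.Icc a b} {g : Equiv.Perm (Set.Icc a b)}
    (hg : g p = p) (k : ℕ) : (g ^ k) p = p := by
  induction k with
  | zero => simp
  | succ k ih => rw [pow_succ]; exact fix_mul ih hg

lemma fix_zpow {p : Set.Icc a b} {g : Equiv.Perm (Set.Icc a b)}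
    (hg : g p = p) (k : ℤ) : (g ^ k) p = p := by
  cases k with
  | ofNat q => rw [Int.ofNat_eq_coe, zpow_natCast]; exact fix_pow hg q
  | negSucc q => rw [zpow_negSucc]; exact fix_inv (fix_pow hg (q + 1))

end Stmt19Aux

open Stmt19Aux

/-- **the sublemma.** If `u`, `v`, `w` are piecewise linear,
orientation-preserving self-homeomorphisms of `[a,b]`, each fixing `a` and `b` and with
no fixed point in `(a,b)`, and if both `w⁻ᵐvwᵐ` and `w⁻ⁿvwⁿ` commute with `u`, then
`w^(n-m)` commutes with `v`. -/
theorem stmt19 (a b : ℝ) (hab : a < b) (u v w : Equiv.Perm (Set.Icc a b))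
    (hu : IsOneBumpPL a b u) (hv : IsOneBumpPL a b v) (hw : IsOneBumpPL a b w)
    (m n : ℤ)
    (hm : Commute (w ^ (-m) * v * w ^ m) u)
    (hn : Commute (w ^ (-n) * v * w ^ n) u) :
    Commute (w ^ (n - m)) v := by
  have hb_mem : b ∈ Set.Icc a b := ⟨hab.le, le_refl b⟩
  have hvsm : StrictMono ⇑v := strictMono_subtype hv.1
  have hwsm : StrictMono ⇑w := strictMono_subtype hw.1
  obtain ⟨sv, hsv⟩ := exists_hasSlope hab hv
  obtain ⟨sw, hsw⟩ := exists_hasSlope hab hw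
  have hsvne : sv ≠ 0 := ne_of_gt hsv.1
  have hswne : sw ≠ 0 := ne_of_gt hsw.1
  -- slopes of conjugates of v by powers of w
  have hconj : ∀ k : ℤ, HasSlope a b (w ^ (-k) * v * w ^ k) sv := by
    intro k
    have h1 := hasSlope_mul (hasSlope_mul (hasSlope_zpow hab hwsm hsw (-k)) hsv)
      (hasSlope_zpow hab hwsm hsw k)
    have h2 : sw ^ (-k) * sv * sw ^ k = sv := by
      rw [zpow_neg]
      field_simp
    rwa [h2] at h1
  have hconjinv : ∀ k : ℤ, HasSlope a b ((w ^ (-k) * v * w ^ k)⁻¹) sv⁻¹ := by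
    intro k
    have heq : (w ^ (-k) * v * w ^ k)⁻¹ = w ^ (-k) * v⁻¹ * w ^ k := by group
    rw [heq]
    have h1 := hasSlope_mul (hasSlope_mul (hasSlope_zpow hab hwsm hsw (-k))
      (hasSlope_inv hab hvsm hsv)) (hasSlope_zpow hab hwsm hsw k)
    have h2 : sw ^ (-k) * sv⁻¹ * sw ^ k = sv⁻¹ := by
      rw [zpow_neg]
      field_simp
    rwa [h2] at h1
  -- endpoint fixing
  set bpt : Set.Icc a b := ⟨b, hb_mem⟩ with hbpt
  have hvb : v bpt = bpt := hv.2.1 bpt (Or.inr rfl)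
  have hwb : w bpt = bpt := hw.2.1 bpt (Or.inr rfl)
  have hconjb : ∀ k : ℤ, (w ^ (-k) * v * w ^ k) bpt = bpt := fun k =>
    fix_mul (fix_mul (fix_zpow hwb (-k)) hvb) (fix_zpow hwb k)
  -- the commutator of the two conjugates
  have hq_comm : Commute ((w ^ (-m) * v * w ^ m) * (w ^ (-n) * v * w ^ n) *
      (w ^ (-m) * v * w ^ m)⁻¹ * (w ^ (-n) * v * w ^ n)⁻¹) u :=
    ((hm.mul_left hn).mul_left hm.inv_left).mul_left hn.inv_left
  have hq_slope : HasSlope a b ((w ^ (-m) * v * w ^ m) * (w ^ (-n) * v * w ^ n) *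
      (w ^ (-m) * v * w ^ m)⁻¹ * (w ^ (-n) * v * w ^ n)⁻¹) 1 := by
    have h1 := hasSlope_mul (hasSlope_mul (hasSlope_mul (hconj m) (hconj n))
      (hconjinv m)) (hconjinv n)
    have h2 : sv * sv * sv⁻¹ * sv⁻¹ = 1 := by field_simp
    rwa [h2] at h1
  have hq_b : ∀ z : Set.Icc a b, (z : ℝ) = b →
      ((w ^ (-m) * v * w ^ m) * (w ^ (-n) * v * w ^ n) *
        (w ^ (-m) * v * w ^ m)⁻¹ * (w ^ (-n) * v * w ^ n)⁻¹) z = z := by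
    intro z hz
    have hzb : z = bpt := Subtype.ext hz
    rw [hzb]
    exact fix_mul (fix_mul (fix_mul (hconjb m) (hconjb n)) (fix_inv (hconjb m)))
      (fix_inv (hconjb n))
  have hq_eq := rigid hab hu hq_comm hq_b (near_of_slope_one hq_slope)
  -- so the two conjugates commute
  have hcd : (w ^ (-m) * v * w ^ m) * (w ^ (-n) * v * w ^ n)
      = (w ^ (-n) * v * w ^ n) * (w ^ (-m) * v * w ^ m) := by
    calc (w ^ (-m) * v * w ^ m) * (w ^ (-n) * v * w ^ n)
        = ((w ^ (-m) * v * w ^ m) * (w ^ (-n) * v * w ^ n) *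
          (w ^ (-m) * v * w ^ m)⁻¹ * (w ^ (-n) * v * w ^ n)⁻¹) *
          ((w ^ (-n) * v * w ^ n) * (w ^ (-m) * v * w ^ m)) := by group
      _ = (w ^ (-n) * v * w ^ n) * (w ^ (-m) * v * w ^ m) := by rw [hq_eq]; group
  -- conjugate back by w^m : v commutes with v₁ := w^(-(n-m)) * v * w^(n-m)
  have hvv1 : v * (w ^ (-(n - m)) * v * w ^ (n - m))
      = (w ^ (-(n - m)) * v * w ^ (n - m)) * v := by
    calc v * (w ^ (-(n - m)) * v * w ^ (n - m))
        = w ^ m * ((w ^ (-m) * v * w ^ m) * (w ^ (-n) * v * w ^ n)) * (w ^ m)⁻¹ := by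
          group
      _ = w ^ m * ((w ^ (-n) * v * w ^ n) * (w ^ (-m) * v * w ^ m)) * (w ^ m)⁻¹ := by
          rw [hcd]
      _ = (w ^ (-(n - m)) * v * w ^ (n - m)) * v := by group
  -- h := v * v₁⁻¹ commutes with v, fixes b, has slope 1
  have hcv : Commute (v * (w ^ (-(n - m)) * v * w ^ (n - m))⁻¹) v := by
    have h1 : Commute (w ^ (-(n - m)) * v * w ^ (n - m)) v := hvv1.symm
    exact (Commute.refl v).mul_left h1.inv_left
  have hh_slope : HasSlope a b (v * (w ^ (-(n - m)) * v * w ^ (n - m))⁻¹) 1 := by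
    have h1 := hasSlope_mul hsv (hconjinv (n - m))
    rwa [mul_inv_cancel₀ hsvne] at h1
  have hh_b : ∀ z : Set.Icc a b, (z : ℝ) = b →
      (v * (w ^ (-(n - m)) * v * w ^ (n - m))⁻¹) z = z := by
    intro z hz
    have hzb : z = bpt := Subtype.ext hz
    rw [hzb]
    exact fix_mul hvb (fix_inv (hconjb (n - m)))
  have hh_eq := rigid hab hv hcv hh_b (near_of_slope_one hh_slope)
  have hveq : v = w ^ (-(n - m)) * v * w ^ (n - m) := mul_inv_eq_one.mp hh_eq
  show w ^ (n - m) * v = v * w ^ (n - m)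
  calc w ^ (n - m) * v = w ^ (n - m) * (w ^ (-(n - m)) * v * w ^ (n - m)) := by
        rw [← hveq]
    _ = v * w ^ (n - m) := by group
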